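/- Suppose an operator G : ℝ^{Md} → ℝ^{Md} is given by G(μ) = μ + s∇Q(μ|μ) where ∇q(μ) = (diag(π)⊗I_d)(μ* − μ), s = 2/(π_min + π_max), and the gradient stability bound ‖∇Q(μ|μ) − ∇q(μ)‖ ≤ γ‖μ − μ*‖ holds for all μ in a set containing the iterates, with 0 < γ < π_min. Then the iterates μ^{t+1} = G(μ^t) satisfy ‖μ^t − μ*‖ ≤ ζ^t ‖μ^0 − μ*‖ with ζ = (π_max − π_min + 2γ)/(π_max + π_min) < 1. -/

import Mathlib

open Real

lemma aux_scale_norm {d M : ℕ} (a : Fin M → ℝ) (c : ℝ) (hc : 0 ≤ c)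
    (ha : ∀ i, |a i| ≤ c) (x : PiLp 2 fun _ : Fin M => EuclideanSpace ℝ (Fin d)) :
    ‖(show PiLp 2 fun _ : Fin M => EuclideanSpace ℝ (Fin d) from
        WithLp.toLp 2 fun i => a i • x i)‖ ≤ c * ‖x‖ := by
  have h1 : ‖(show PiLp 2 fun _ : Fin M => EuclideanSpace ℝ (Fin d) from
        WithLp.toLp 2 fun i => a i • x i)‖ ^ 2 ≤ (c * ‖x‖) ^ 2 := by
    rw [PiLp.norm_sq_eq_of_L2]
    have h2 : (c * ‖x‖) ^ 2 = ∑ i, c ^ 2 * ‖x i‖ ^ 2 := by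
      rw [← Finset.mul_sum, ← PiLp.norm_sq_eq_of_L2]; ring
    rw [h2]
    apply Finset.sum_le_sum
    intro i _
    have hni : ‖a i • x i‖ = |a i| * ‖x i‖ := by
      rw [norm_smul, Real.norm_eq_abs]
    rw [hni, mul_pow]
    have h3 : |a i| ^ 2 ≤ c ^ 2 := by nlinarith [ha i, abs_nonneg (a i)]
    exact mul_le_mul_of_nonneg_right h3 (by positivity)
  nlinarith [norm_nonneg (show PiLp 2 fun _ : Fin M => EuclideanSpace ℝ (Fin d) from
        WithLp.toLp 2 fun i => a i • x i), mul_nonneg hc (norm_nonneg x)]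

/-- Convergence of population gradient EM: if `G(μ) = μ + s∇Q(μ|μ)` with
`s = 2/(π_min + π_max)`, `∇q(μ)ᵢ = πᵢ(μᵢ* − μᵢ)` and the gradient stability
bound `‖∇Q(μ|μ) − ∇q(μ)‖ ≤ γ‖μ − μ*‖` holds along the iterates with
`0 < γ < π_min`, then `‖μ^t − μ*‖ ≤ ζ^t ‖μ^0 − μ*‖` with
`ζ = (π_max − π_min + 2γ)/(π_max + π_min) < 1`. -/
theorem stmt17 (d M : ℕ) (πmin πmax γ : ℝ) (hmin : 0 < πmin) (hle : πmin ≤ πmax)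
    (hγ0 : 0 < γ) (hγ : γ < πmin)
    (w : Fin M → ℝ) (hw : ∀ i, πmin ≤ w i ∧ w i ≤ πmax)
    (GQ : (PiLp 2 fun _ : Fin M => EuclideanSpace ℝ (Fin d)) →
          PiLp 2 fun _ : Fin M => EuclideanSpace ℝ (Fin d))
    (μs : PiLp 2 fun _ : Fin M => EuclideanSpace ℝ (Fin d))
    (μseq : ℕ → PiLp 2 fun _ : Fin M => EuclideanSpace ℝ (Fin d))
    (hiter : ∀ t, μseq (t + 1) = μseq t + (2 / (πmin + πmax)) • GQ (μseq t))
    (hstab : ∀ t, ‖GQ (μseq t) -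
        (show PiLp 2 fun _ : Fin M => EuclideanSpace ℝ (Fin d) from
          WithLp.toLp 2 fun i => w i • (μs i - μseq t i))‖ ≤ γ * ‖μseq t - μs‖) :
    (πmax - πmin + 2 * γ) / (πmax + πmin) < 1 ∧
    ∀ t, ‖μseq t - μs‖ ≤ ((πmax - πmin + 2 * γ) / (πmax + πmin)) ^ t * ‖μseq 0 - μs‖ := by
  have hsum : 0 < πmax + πmin := by linarith
  have hsum' : 0 < πmin + πmax := by linarith
  set s : ℝ := 2 / (πmin + πmax) with hs
  set ζ : ℝ := (πmax - πmin + 2 * γ) / (πmax + πmin) with hζ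
  have hs0 : 0 < s := by positivity
  have hζ1 : ζ < 1 := by
    rw [hζ, div_lt_one hsum]; linarith
  have hζ0 : 0 ≤ ζ := by
    apply div_nonneg _ hsum.le; linarith
  refine ⟨hζ1, ?_⟩
  set c : ℝ := (πmax - πmin) / (πmax + πmin) with hc
  have hc0 : 0 ≤ c := by apply div_nonneg _ hsum.le; linarith
  have key : ∀ t, ‖μseq (t + 1) - μs‖ ≤ ζ * ‖μseq t - μs‖ := by
    intro t
    set x : PiLp 2 fun x => EuclideanSpace ℝ (Fin d) := μseq t - μs with hx
    set D : PiLp 2 fun x => EuclideanSpace ℝ (Fin d) :=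
      WithLp.toLp 2 fun i => w i • (μs i - μseq t i) with hD
    have hdec : μseq (t + 1) - μs =
        (show PiLp 2 fun _ : Fin M => EuclideanSpace ℝ (Fin d) from
          WithLp.toLp 2 fun i => (1 - s * w i) • x i) + s • (GQ (μseq t) - D) := by
      rw [hiter t]
      ext i : 1
      show (μseq t i + s • GQ (μseq t) i) - μs i
          = (1 - s * w i) • (μseq t i - μs i) + s • (GQ (μseq t) i - w i • (μs i - μseq t i))
      module
    have h1 : ‖(show PiLp 2 fun _ : Fin M => EuclideanSpace ℝ (Fin d) from
          WithLp.toLp 2 fun i => (1 - s * w i) • x i)‖ ≤ c * ‖x‖ := by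
      apply aux_scale_norm _ _ hc0
      intro i
      obtain ⟨hw1, hw2⟩ := hw i
      have he : 1 - s * w i = (πmin + πmax - 2 * w i) / (πmin + πmax) := by
        rw [hs]; field_simp
      have hce : c = (πmax - πmin) / (πmin + πmax) := by
        rw [hc, add_comm πmax πmin]
      rw [he, hce, abs_div, abs_of_pos hsum', div_le_div_iff_of_pos_right hsum']
      rw [abs_le]
      constructor <;> linarith
    have h2 : ‖s • (GQ (μseq t) - D)‖ ≤ s * (γ * ‖x‖) := by
      rw [norm_smul, Real.norm_eq_abs, abs_of_pos hs0]
      exact mul_le_mul_of_nonneg_left (hstab t) hs0.le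
    calc ‖μseq (t + 1) - μs‖ ≤ c * ‖x‖ + s * (γ * ‖x‖) := by
          rw [hdec]; exact le_trans (norm_add_le _ _) (add_le_add h1 h2)
      _ = ζ * ‖x‖ := by rw [hc, hs, hζ]; field_simp; ring
  intro t
  induction t with
  | zero => simp
  | succ n ih =>
    calc ‖μseq (n + 1) - μs‖ ≤ ζ * ‖μseq n - μs‖ := key n
      _ ≤ ζ * (ζ ^ n * ‖μseq 0 - μs‖) := mul_le_mul_of_nonneg_left ih hζ0
      _ = ζ ^ (n + 1) * ‖μseq 0 - μs‖ := by ring
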